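/- Let n ≥ 1, let Σ ⊂ ℝⁿ⁺¹ be a closed set, and let σ be a Borel measure on ℝⁿ⁺¹ supported in Σ. Let (x₀,t₀) ∈ Σ, r > 0, M₀ ≥ 1 and c > 0. Assume the upper ADR bound σ(Q_ρ(z,τ) ∩ Σ) ≤ M₀ρⁿ⁺¹ for every (z,τ) ∈ Σ and every 0 < ρ ≤ r, and assume the time-backwards lower bound σ(Q_r⁻(x₀,t₀) ∩ Σ) ≥ c·rⁿ⁺¹. Then there exist a ∈ (0,1/2) and b > 0, depending only on n, M₀ and c, such that σ(Σ ∩ Q_r⁻(x₀,t₀) ∩ {(y,s) : s < t₀ − (ar)²}) ≥ b·rⁿ⁺¹; in particular σ(Σ ∩ Q_r⁻(x₀, t₀ − (ar)²)) ≥ b·rⁿ⁺¹. -/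

import Mathlib

open MeasureTheory Set Filter Topology

noncomputable section

/-- Points of space-time `ℝⁿ × ℝ`. -/
abbrev Pt (n : ℕ) : Type := EuclideanSpace ℝ (Fin n) × ℝ

/-- The open parabolic cube `Q_r(c)`. -/
def pcube (n : ℕ) (c : Pt n) (r : ℝ) : Set (Pt n) :=
  {p | (∀ i, |p.1 i - c.1 i| < r) ∧ c.2 - r ^ 2 < p.2 ∧ p.2 < c.2 + r ^ 2}

/-- The time-backward half cube `Q_r⁻(c)`. -/
def pcubeMinus (n : ℕ) (c : Pt n) (r : ℝ) : Set (Pt n) :=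
  {p | (∀ i, |p.1 i - c.1 i| < r) ∧ c.2 - r ^ 2 < p.2 ∧ p.2 < c.2}

/-- The time-forward half cube `Q_r⁺(c)`. -/
def pcubePlus (n : ℕ) (c : Pt n) (r : ℝ) : Set (Pt n) :=
  {p | (∀ i, |p.1 i - c.1 i| < r) ∧ c.2 < p.2 ∧ p.2 < c.2 + r ^ 2}

/-- The parabolic norm `‖(X,t)‖ = |X| + |t|^{1/2}`. -/
def pnorm (n : ℕ) (p : Pt n) : ℝ := ‖p.1‖ + Real.sqrt |p.2|

/-- The parabolic distance. -/
def pdist (n : ℕ) (p q : Pt n) : ℝ := pnorm n (p.1 - q.1, p.2 - q.2)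

/-- The parabolic diameter of a set (in `ℝ≥0∞`). -/
def pdiam (n : ℕ) (A : Set (Pt n)) : ENNReal :=
  ⨆ p ∈ A, ⨆ q ∈ A, ENNReal.ofReal (pdist n p q)

/-- The parabolic distance from a point to a set. -/
def pdistTo (n : ℕ) (p : Pt n) (A : Set (Pt n)) : ℝ := sInf ((pdist n p) '' A)

/-- The parabolic boundary `𝒫Ω`. -/
def parabolicBdry (n : ℕ) (Ω : Set (Pt n)) : Set (Pt n) :=
  {p | p ∈ frontier Ω ∧ ∀ r > 0, (pcubeMinus n p r ∩ Ωᶜ).Nonempty}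

/-- The bottom boundary `ℬΩ`. -/
def bottomBdry (n : ℕ) (Ω : Set (Pt n)) : Set (Pt n) :=
  {p | p ∈ parabolicBdry n Ω ∧ ∃ ε > 0, pcubePlus n p ε ⊆ Ω}

/-- The abnormal boundary `∂ₐΩ`. -/
def abnormalBdry (n : ℕ) (Ω : Set (Pt n)) : Set (Pt n) :=
  {p | p ∈ frontier Ω ∧ ∃ ε > 0, pcubeMinus n p ε ⊆ Ω}

/-- The singular boundary `∂ₛΩ`. -/
def singBdry (n : ℕ) (Ω : Set (Pt n)) : Set (Pt n) :=
  {p | p ∈ abnormalBdry n Ω ∧ ∃ ε > 0, pcubePlus n p ε ∩ Ω = ∅}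

/-- The essential boundary `∂ₑΩ = ∂Ω ∖ ∂ₛΩ`. -/
def essBdry (n : ℕ) (Ω : Set (Pt n)) : Set (Pt n) := frontier Ω \ singBdry n Ω

/-- `T_min(Ω)`, as an extended real number. -/
def parTmin (n : ℕ) (Ω : Set (Pt n)) : EReal := ⨅ p ∈ Ω, (p.2 : EReal)

/-- `T_max(Ω)`, as an extended real number. -/
def parTmax (n : ℕ) (Ω : Set (Pt n)) : EReal := ⨆ p ∈ Ω, (p.2 : EReal)

/-- The quasi-lateral boundary `Σ`:  `∂Ω` with the time slice of `ℬΩ` at `t = T_min(Ω)`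
removed (when `T_min(Ω) > -∞`), and the time slice of `∂ₛΩ` at `t = T_max(Ω)` removed
(when `T_max(Ω) < ∞`).  Since no real time coordinate can equal `±∞`, the `EReal`
formulation below encodes exactly this. -/
def quasiLateral (n : ℕ) (Ω : Set (Pt n)) : Set (Pt n) :=
  frontier Ω \
    ({p | p ∈ bottomBdry n Ω ∧ (p.2 : EReal) = parTmin n Ω} ∪
     {p | p ∈ singBdry n Ω ∧ (p.2 : EReal) = parTmax n Ω})

/-- The free-space heat kernel. -/
def heatKernel (n : ℕ) (X : EuclideanSpace ℝ (Fin n)) (t : ℝ)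
    (y : EuclideanSpace ℝ (Fin n)) (s : ℝ) : ℝ :=
  if s < t then
    (4 * Real.pi * (t - s)) ^ (-(n : ℝ) / 2) * Real.exp (-‖X - y‖ ^ 2 / (4 * (t - s)))
  else 0

/-- Time derivative `∂ₜ u`. -/
def timeDeriv (n : ℕ) (u : Pt n → ℝ) (p : Pt n) : ℝ := deriv (fun τ => u (p.1, τ)) p.2

/-- Spatial Laplacian `Δ_X u`. -/
def spaceLaplacian (n : ℕ) (u : Pt n → ℝ) (p : Pt n) : ℝ :=
  ∑ i : Fin n,
    iteratedDeriv 2 (fun h : ℝ => u (p.1 + h • EuclideanSpace.single i (1 : ℝ), p.2)) 0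

/-- A classical supersolution of the heat equation on `U`: continuous on `U`,
twice continuously differentiable in `X` and once in `t`, with `∂ₜ u - Δ_X u ≥ 0`. -/
structure IsSupersolutionOn (n : ℕ) (u : Pt n → ℝ) (U : Set (Pt n)) : Prop where
  cont : ContinuousOn u U
  smoothX : ∀ p ∈ U, ContDiffAt ℝ 2 (fun X => u (X, p.2)) p.1
  smoothT : ∀ p ∈ U, ContDiffAt ℝ 1 (fun τ => u (p.1, τ)) p.2
  ineq : ∀ p ∈ U, spaceLaplacian n u p ≤ timeDeriv n u p

/-- A classical subsolution of the heat equation on `U`. -/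
structure IsSubsolutionOn (n : ℕ) (u : Pt n → ℝ) (U : Set (Pt n)) : Prop where
  cont : ContinuousOn u U
  smoothX : ∀ p ∈ U, ContDiffAt ℝ 2 (fun X => u (X, p.2)) p.1
  smoothT : ∀ p ∈ U, ContDiffAt ℝ 1 (fun τ => u (p.1, τ)) p.2
  ineq : ∀ p ∈ U, timeDeriv n u p ≤ spaceLaplacian n u p

/-- A caloric function (classical solution of the heat equation) on `U`. -/
structure IsCaloricOn (n : ℕ) (u : Pt n → ℝ) (U : Set (Pt n)) : Prop where
  cont : ContinuousOn u U
  smoothX : ∀ p ∈ U, ContDiffAt ℝ 2 (fun X => u (X, p.2)) p.1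
  smoothT : ∀ p ∈ U, ContDiffAt ℝ 1 (fun τ => u (p.1, τ)) p.2
  eq : ∀ p ∈ U, timeDeriv n u p = spaceLaplacian n u p
lemma mem_pcube_iff' (n : ℕ) (c : Pt n) (r : ℝ) (p : Pt n) :
    p ∈ pcube n c r ↔ (∀ i, |p.1 i - c.1 i| < r) ∧ c.2 - r ^ 2 < p.2 ∧ p.2 < c.2 + r ^ 2 :=
  Iff.rfl

lemma mem_pcubeMinus_iff' (n : ℕ) (c : Pt n) (r : ℝ) (p : Pt n) :
    p ∈ pcubeMinus n c r ↔ (∀ i, |p.1 i - c.1 i| < r) ∧ c.2 - r ^ 2 < p.2 ∧ p.2 < c.2 :=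
  Iff.rfl

/-- time-backwards ADR self-improves: a definite proportion of the mass of a
backward surface cube lives strictly backwards in time (Claim 1 of Appendix A / Remark 1.8). -/
theorem statement_5 (n : ℕ) (hn : 1 ≤ n) (M₀ c : ℝ) (hM₀ : 1 ≤ M₀) (hc : 0 < c) :
    ∃ a b : ℝ, a ∈ Set.Ioo (0 : ℝ) (1 / 2) ∧ 0 < b ∧
      ∀ (S : Set (Pt n)) (σ : Measure (Pt n)) (x₀ : Pt n) (r : ℝ),
        IsClosed S → σ Sᶜ = 0 → x₀ ∈ S → 0 < r →
        (∀ z ∈ S, ∀ ρ : ℝ, 0 < ρ → ρ ≤ r →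
          σ (pcube n z ρ ∩ S) ≤ ENNReal.ofReal (M₀ * ρ ^ (n + 1))) →
        ENNReal.ofReal (c * r ^ (n + 1)) ≤ σ (pcubeMinus n x₀ r ∩ S) →
        ENNReal.ofReal (b * r ^ (n + 1)) ≤
            σ (S ∩ pcubeMinus n x₀ r ∩ {p | p.2 < x₀.2 - (a * r) ^ 2}) ∧
        ENNReal.ofReal (b * r ^ (n + 1)) ≤
            σ (S ∩ pcubeMinus n (x₀.1, x₀.2 - (a * r) ^ 2) r) := by
  have hM0pos : (0:ℝ) < M₀ := lt_of_lt_of_le one_pos hM₀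
  set a : ℝ := min (1/4) (c / (2 * 3^n * M₀)) with ha_def
  have ha_pos : 0 < a := lt_min (by norm_num) (by positivity)
  have ha_le : a ≤ 1/4 := min_le_left _ _
  have ha2 : a ≤ c / (2 * 3^n * M₀) := min_le_right _ _
  refine ⟨a, c/2, ⟨ha_pos, lt_of_le_of_lt ha_le (by norm_num)⟩, by positivity, ?_⟩
  intro S σ x₀ r hS hσS hx₀ hr hADR hlow
  set K : ℕ := ⌈(2:ℝ)/a⌉₊ with hK_def
  have hK1 : (2:ℝ)/a ≤ K := Nat.le_ceil _
  have hKa : (K:ℝ) * a ≤ 3 := by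
    have h := Nat.ceil_lt_add_one (show (0:ℝ) ≤ 2/a by positivity)
    have h2 : (2/a) * a = 2 := div_mul_cancel₀ 2 ha_pos.ne'
    nlinarith [mul_lt_mul_of_pos_right h ha_pos]
  have har : 0 < a * r := mul_pos ha_pos hr
  -- main numeric estimate
  have hnum : (K:ℝ)^n * (M₀ * (a*r)^(n+1)) ≤ c/2 * r^(n+1) := by
    have h1 : ((K:ℝ)*a)^n ≤ 3^n := by
      apply pow_le_pow_left₀ (by positivity) hKa
    have h3 : (K:ℝ)^n * a^(n+1) ≤ 3^n * a := by
      have : (K:ℝ)^n * a^(n+1) = ((K:ℝ)*a)^n * a := by rw [mul_pow, pow_succ]; ring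
      rw [this]
      exact mul_le_mul_of_nonneg_right h1 ha_pos.le
    have h4 : (3:ℝ)^n * a ≤ c/(2*M₀) := by
      calc (3:ℝ)^n * a ≤ 3^n * (c/(2*3^n*M₀)) :=
            mul_le_mul_of_nonneg_left ha2 (by positivity)
        _ = c/(2*M₀) := by field_simp
    calc (K:ℝ)^n * (M₀*(a*r)^(n+1)) = ((K:ℝ)^n * a^(n+1)) * M₀ * r^(n+1) := by
          rw [mul_pow]; ring
      _ ≤ ((3:ℝ)^n * a) * M₀ * r^(n+1) := by
          apply mul_le_mul_of_nonneg_right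
            (mul_le_mul_of_nonneg_right h3 hM0pos.le) (by positivity)
      _ ≤ (c/(2*M₀)) * M₀ * r^(n+1) := by
          apply mul_le_mul_of_nonneg_right
            (mul_le_mul_of_nonneg_right h4 hM0pos.le) (by positivity)
      _ = c/2 * r^(n+1) := by field_simp
  have hKpos : 0 < K := Nat.ceil_pos.mpr (by positivity)
  -- the slab
  set T : Set (Pt n) := S ∩ pcubeMinus n x₀ r ∩ {p | x₀.2 - (a*r)^2 ≤ p.2} with hT
  set A : (Fin n → Fin K) → Set (Pt n) := fun k =>
    T ∩ {p | ∀ i, x₀.1 i - r + (k i : ℝ) * (a*r) ≤ p.1 i ∧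
      p.1 i < x₀.1 i - r + ((k i : ℝ) + 1) * (a*r)} with hA
  have hcover : T ⊆ ⋃ k : (Fin n → Fin K), A k := by
    intro p hp
    have hsp : ∀ i, |p.1 i - x₀.1 i| < r := ((mem_pcubeMinus_iff' n x₀ r p).mp hp.1.2).1
    have h0 : ∀ i, 0 ≤ (p.1 i - x₀.1 i + r)/(a*r) := by
      intro i
      apply div_nonneg _ har.le
      have := abs_lt.mp (hsp i); linarith
    have hKa2 : (2:ℝ) ≤ (K:ℝ)*a := (div_le_iff₀ ha_pos).mp hK1
    have hidx : ∀ i, ⌊(p.1 i - x₀.1 i + r)/(a*r)⌋₊ < K := by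
      intro i
      rw [Nat.floor_lt (h0 i)]
      have hv : p.1 i - x₀.1 i + r < 2*r := by
        have := abs_lt.mp (hsp i); linarith
      rw [div_lt_iff₀ har]
      nlinarith [mul_le_mul_of_nonneg_right hKa2 hr.le]
    refine Set.mem_iUnion.mpr ⟨fun i => ⟨⌊(p.1 i - x₀.1 i + r)/(a*r)⌋₊, hidx i⟩, hp, ?_⟩
    intro i
    simp only [Fin.val_mk]
    constructor
    · have h1 : (⌊(p.1 i - x₀.1 i + r)/(a*r)⌋₊ : ℝ) ≤ (p.1 i - x₀.1 i + r)/(a*r) :=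
        Nat.floor_le (h0 i)
      rw [le_div_iff₀ har] at h1
      linarith
    · have h2 : (p.1 i - x₀.1 i + r)/(a*r) < (⌊(p.1 i - x₀.1 i + r)/(a*r)⌋₊ : ℝ) + 1 :=
        Nat.lt_floor_add_one _
      rw [div_lt_iff₀ har] at h2
      linarith
  -- per-cube mass bound
  have hAk : ∀ k, σ (A k) ≤ ENNReal.ofReal (M₀ * (a*r)^(n+1)) := by
    intro k
    rcases Set.eq_empty_or_nonempty (A k) with h | ⟨z, hz⟩
    · simp [h]
    · have hzS : z ∈ S := hz.1.1.1
      have hzQ := (mem_pcubeMinus_iff' n x₀ r z).mp hz.1.1.2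
      have hzt : x₀.2 - (a*r)^2 ≤ z.2 := hz.1.2
      have hsub : A k ⊆ pcube n z (a*r) ∩ S := by
        intro p hp
        have hpQ := (mem_pcubeMinus_iff' n x₀ r p).mp hp.1.1.2
        have hpt : x₀.2 - (a*r)^2 ≤ p.2 := hp.1.2
        refine ⟨(mem_pcube_iff' n z (a*r) p).mpr ⟨fun i => ?_, ?_, ?_⟩, hp.1.1.1⟩
        · have h1 := hp.2 i; have h2 := hz.2 i
          rw [abs_lt]; constructor <;> [linarith [h1.1, h2.2]; linarith [h1.2, h2.1]]
        · have := hzQ.2.2; linarith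
        · have := hpQ.2.2; linarith
      calc σ (A k) ≤ σ (pcube n z (a*r) ∩ S) := measure_mono hsub
        _ ≤ ENNReal.ofReal (M₀ * (a*r)^(n+1)) := by
            apply hADR z hzS (a*r) har
            nlinarith
  -- slab mass bound
  have hTle : σ T ≤ ENNReal.ofReal (c/2 * r^(n+1)) := by
    calc σ T ≤ σ (⋃ k : (Fin n → Fin K), A k) := measure_mono hcover
      _ ≤ ∑' k : (Fin n → Fin K), σ (A k) := measure_iUnion_le _
      _ = ∑ k : (Fin n → Fin K), σ (A k) := tsum_fintype _
      _ ≤ ∑ _k : (Fin n → Fin K), ENNReal.ofReal (M₀ * (a*r)^(n+1)) :=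
          Finset.sum_le_sum (fun k _ => hAk k)
      _ = (K^n : ℕ) * ENNReal.ofReal (M₀ * (a*r)^(n+1)) := by
          rw [Finset.sum_const, Finset.card_univ]
          simp [Fintype.card_fun, nsmul_eq_mul]
      _ ≤ ENNReal.ofReal (c/2 * r^(n+1)) := by
          rw [← ENNReal.ofReal_natCast (K^n), ← ENNReal.ofReal_mul (by positivity)]
          apply ENNReal.ofReal_le_ofReal
          push_cast
          exact hnum
  -- deduce first inequality
  set R : Set (Pt n) := S ∩ pcubeMinus n x₀ r ∩ {p | p.2 < x₀.2 - (a*r)^2} with hR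
  have hsplit : pcubeMinus n x₀ r ∩ S ⊆ T ∪ R := by
    intro p hp
    by_cases h : p.2 < x₀.2 - (a*r)^2
    · exact Or.inr ⟨⟨hp.2, hp.1⟩, h⟩
    · exact Or.inl ⟨⟨hp.2, hp.1⟩, not_lt.mp h⟩
  have hrest : ENNReal.ofReal (c/2 * r^(n+1)) ≤ σ R := by
    have h1 : ENNReal.ofReal (c * r^(n+1)) ≤ σ T + σ R :=
      le_trans hlow (le_trans (measure_mono hsplit) (measure_union_le _ _))
    have h2 : ENNReal.ofReal (c * r^(n+1)) =
        ENNReal.ofReal (c/2 * r^(n+1)) + ENNReal.ofReal (c/2 * r^(n+1)) := by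
      rw [← ENNReal.ofReal_add (by positivity) (by positivity)]
      ring_nf
    have h3 : ENNReal.ofReal (c/2 * r^(n+1)) + ENNReal.ofReal (c/2 * r^(n+1)) ≤
        ENNReal.ofReal (c/2 * r^(n+1)) + σ R := by
      rw [← h2]
      exact le_trans h1 (add_le_add hTle le_rfl)
    exact (ENNReal.add_le_add_iff_left ENNReal.ofReal_ne_top).mp h3
  refine ⟨hrest, le_trans hrest (measure_mono ?_)⟩
  rintro p ⟨⟨hpS, hpQ⟩, hpt⟩
  have hpQ' := (mem_pcubeMinus_iff' n x₀ r p).mp hpQ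
  refine ⟨hpS, (mem_pcubeMinus_iff' n _ r p).mpr ⟨fun i => hpQ'.1 i, ?_, ?_⟩⟩
  · have := hpQ'.2.1
    simp only
    nlinarith [sq_nonneg (a*r)]
  · exact hpt
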